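/- Let ε ∈ {1,−1}, ξ > 0, w_m ∈ ℝ, λ*, z* ∈ ℝ with c₁ := 2ξλ*z* + 1 + w_m > 0, and y* = √(4ξ/c₁). Define F(u,v) = −3y*c₁·uv, G(u,v) = −12ξv + (ε/2)(1−3w_m)y*·u² − (9/2)c₁y*·v² + 12εξ(1−6ξ)z*·uv, and φ(u) = (ε(1−3w_m)y*/(24ξ))·u² + ((1−6ξ)(1−3w_m)z*y*/(24ξ))·u³. Then, as u → 0: (i) φ′(u)·F(u, φ(u)) − G(u, φ(u)) = O(u⁴); (ii) F(u, φ(u)) = −(ε/2)(1−3w_m)·u³ + O(u⁴). In particular, the vector field restricted to the center manifold v = φ(u) of the fast-roll inflation point is η′ = −(ε/2)(1−3w_m)η³ + O(η⁴), which is stable for ε(1−3w_m) > 0 and unstable for ε(1−3w_m) < 0. -/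

import Mathlib

open Asymptotics Filter

lemma aux_bigO (f g : ℝ → ℝ) (hg : Continuous g) (h : ∀ u, f u = u^4 * g u) :
    f =O[nhds (0:ℝ)] fun u => u^4 := by
  have h1 : g =O[nhds (0:ℝ)] (fun _ => (1:ℝ)) :=
    (hg.tendsto 0).isBigO_one ℝ
  have h2 : (fun u : ℝ => u^4) =O[nhds (0:ℝ)] fun u => u^4 := isBigO_refl _ _
  have := h2.mul h1
  simp only [mul_one] at this
  exact this.congr' (by filter_upwards with u using (h u).symm) (by rfl)

theorem fastRoll_center_manifold (ε ξ wm lstar zstar : ℝ)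
    (hε : ε = 1 ∨ ε = -1) (hξ : 0 < ξ)
    (hc : 0 < 2*ξ*lstar*zstar + 1 + wm) :
    let c₁ : ℝ := 2*ξ*lstar*zstar + 1 + wm
    let ystar : ℝ := Real.sqrt (4*ξ/c₁)
    let F : ℝ → ℝ → ℝ := fun u v => -3*ystar*c₁*u*v
    let G : ℝ → ℝ → ℝ := fun u v =>
      -12*ξ*v + ε/2*(1-3*wm)*ystar*u^2 - 9/2*c₁*ystar*v^2
        + 12*ε*ξ*(1-6*ξ)*zstar*u*v
    let φ : ℝ → ℝ := fun u =>
      ε*(1-3*wm)*ystar/(24*ξ)*u^2 + (1-6*ξ)*(1-3*wm)*zstar*ystar/(24*ξ)*u^3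
    ((fun u => deriv φ u * F u (φ u) - G u (φ u)) =O[nhds 0] fun u => u^4) ∧
    ((fun u => F u (φ u) - (-(ε/2)*(1-3*wm)*u^3)) =O[nhds 0] fun u => u^4) := by
  intro c₁ ystar F G φ
  have hξ' : ξ ≠ 0 := ne_of_gt hξ
  have hc₁ : c₁ ≠ 0 := ne_of_gt hc
  set a : ℝ := ε*(1-3*wm)*ystar/(24*ξ) with ha
  set b : ℝ := (1-6*ξ)*(1-3*wm)*zstar*ystar/(24*ξ) with hb
  have hder : ∀ u, deriv φ u = a*(2*u) + b*(3*u^2) := by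
    intro u
    have h1 := (hasDerivAt_pow 2 u).const_mul a
    have h2 := (hasDerivAt_pow 3 u).const_mul b
    have h3 := (h1.add h2).deriv
    simp only [φ, ha, hb, Pi.add_def] at h3 ⊢
    rw [h3]; push_cast; ring
  have hy : ystar * ystar = 4*ξ/c₁ := by
    rw [← sq]; exact Real.sq_sqrt (by positivity)
  have hz : 3*ystar*c₁*a = ε/2*(1-3*wm) := by
    rw [show 3*ystar*c₁*a = (ystar*ystar)*(c₁*ε*(1-3*wm)/(8*ξ)) by rw [ha]; ring, hy]
    field_simp
    ring
  constructor
  · apply aux_bigO _ (fun u =>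
      -3*ystar*c₁*(2*a+3*b*u)*(a+b*u) + 9/2*c₁*ystar*(a+b*u)^2
        - 12*ε*ξ*(1-6*ξ)*zstar*b)
    · fun_prop
    · intro u
      rw [hder u]
      simp only [F, G, φ, ha, hb]
      rcases hε with h | h <;> subst h <;> field_simp <;> ring
  · apply aux_bigO _ (fun _ => -3*ystar*c₁*b)
    · fun_prop
    · intro u
      simp only [F, φ]
      linear_combination (-(u^3)) * hz
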